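/- A nonzero symmetric real d×d matrix B fails to have two nonzero eigenvalues sharing the same sign if and only if B can be written as vvᵀ − wwᵀ for some v, w ∈ ℝ^d with v ≠ ±w. -/

import Mathlib

open Matrix

private lemma matrix_ext_mulVec' {d : ℕ} {A C : Matrix (Fin d) (Fin d) ℝ}
    (h : ∀ x : Fin d → ℝ, A *ᵥ x = C *ᵥ x) : A = C := by
  ext i j
  have := congrFun (h (Pi.single j 1)) i
  simpa [mulVec_single] using this

private lemma vecMulVec_mulVec' {d : ℕ} (v w x : Fin d → ℝ) :
    vecMulVec v w *ᵥ x = (w ⬝ᵥ x) • v := by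
  ext i
  simp [vecMulVec_apply, mulVec, dotProduct, Finset.mul_sum, mul_assoc, mul_comm, mul_left_comm]

private lemma sum_mulVec'' {d : ℕ} {ι : Type*} (s : Finset ι)
    (f : ι → Matrix (Fin d) (Fin d) ℝ) (x : Fin d → ℝ) :
    (∑ i ∈ s, f i) *ᵥ x = ∑ i ∈ s, f i *ᵥ x := by
  ext j
  simp only [mulVec, dotProduct, Finset.sum_apply, Matrix.sum_apply, Finset.sum_mul]
  exact Finset.sum_comm

private lemma mulVec_sum'' {d : ℕ} {ι : Type*} (s : Finset ι) (A : Matrix (Fin d) (Fin d) ℝ)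
    (f : ι → Fin d → ℝ) :
    A *ᵥ (∑ i ∈ s, f i) = ∑ i ∈ s, A *ᵥ f i := by
  ext j
  simp only [mulVec, dotProduct, Finset.sum_apply, Finset.mul_sum]
  exact Finset.sum_comm

private lemma spectral_sum' {d : ℕ} (B : Matrix (Fin d) (Fin d) ℝ) (hB : B.IsHermitian) :
    B = ∑ i, hB.eigenvalues i • vecMulVec ⇑(hB.eigenvectorBasis i) ⇑(hB.eigenvectorBasis i) := by
  apply matrix_ext_mulVec'
  intro x
  have hx : (∑ i, (⇑(hB.eigenvectorBasis i) ⬝ᵥ x) • ⇑(hB.eigenvectorBasis i)) = x := by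
    have h := congrArg WithLp.ofLp (hB.eigenvectorBasis.sum_repr' (WithLp.toLp 2 x))
    simpa [PiLp.inner_apply, dotProduct, mul_comm] using h
  conv_lhs => rw [← hx]
  rw [mulVec_sum'' , sum_mulVec'']
  apply Finset.sum_congr rfl
  intro i _
  rw [mulVec_smul, hB.mulVec_eigenvectorBasis, Matrix.smul_mulVec, vecMulVec_mulVec']
  rw [smul_comm]

private lemma vecMulVec_smul_smul' {d : ℕ} (c : ℝ) (x : Fin d → ℝ) :
    vecMulVec (c • x) (c • x) = (c * c) • vecMulVec x x := by
  ext i j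
  simp [vecMulVec_apply]
  ring

private lemma no_pos_pair {d : ℕ} {v w : Fin d → ℝ} {B : Matrix (Fin d) (Fin d) ℝ}
    (hBvw : B = vecMulVec v v - vecMulVec w w)
    {ui uj : Fin d → ℝ} {li lj : ℝ}
    (hui : B *ᵥ ui = li • ui) (huj : B *ᵥ uj = lj • uj)
    (hii : ui ⬝ᵥ ui = 1) (hjj : uj ⬝ᵥ uj = 1) (hij : ui ⬝ᵥ uj = 0)
    (hli : 0 < li) (hlj : 0 < lj) : False := by
  have hji : uj ⬝ᵥ ui = 0 := by rw [dotProduct_comm]; exact hij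
  obtain ⟨a, b, hab, hv0⟩ :
      ∃ a b : ℝ, ¬(a = 0 ∧ b = 0) ∧ a * (v ⬝ᵥ ui) + b * (v ⬝ᵥ uj) = 0 := by
    by_cases h : v ⬝ᵥ ui = 0
    · exact ⟨1, 0, by simp, by simp [h]⟩
    · exact ⟨v ⬝ᵥ uj, -(v ⬝ᵥ ui), fun hc => h (by simpa using hc.2), by ring⟩
  set x : Fin d → ℝ := a • ui + b • uj with hx
  have hBx : B *ᵥ x = a • (li • ui) + b • (lj • uj) := by
    rw [hx, mulVec_add, mulVec_smul, mulVec_smul, hui, huj]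
  have hq1 : x ⬝ᵥ (B *ᵥ x) = a ^ 2 * li + b ^ 2 * lj := by
    rw [hBx, hx]
    simp [add_dotProduct, dotProduct_add, smul_dotProduct, dotProduct_smul,
      hii, hjj, hij, hji, smul_eq_mul]
    ring
  have hvx : v ⬝ᵥ x = 0 := by
    rw [hx]
    simp only [dotProduct_add, dotProduct_smul, smul_eq_mul]
    linarith [hv0]
  have hq2 : x ⬝ᵥ (B *ᵥ x) = (v ⬝ᵥ x) ^ 2 - (w ⬝ᵥ x) ^ 2 := by
    rw [hBvw, sub_mulVec, vecMulVec_mulVec', vecMulVec_mulVec']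
    simp only [dotProduct_sub, dotProduct_smul, smul_eq_mul]
    rw [dotProduct_comm x v, dotProduct_comm x w]
    ring
  rw [hq2, hvx] at hq1
  have hle : a ^ 2 * li + b ^ 2 * lj ≤ 0 := by nlinarith [sq_nonneg (w ⬝ᵥ x)]
  rcases not_and_or.mp hab with ha | hb
  · nlinarith [sq_nonneg b, pow_pos (abs_pos.mpr ha) 2, sq_abs a]
  · nlinarith [sq_nonneg a, pow_pos (abs_pos.mpr hb) 2, sq_abs b]

/-- A nonzero symmetric real d×d matrix B fails to have two nonzero eigenvalues
sharing the same sign iff B = vvᵀ − wwᵀ for some v, w with v ≠ ±w. -/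
theorem no_two_same_sign_eigenvalues_iff {d : ℕ}
    (B : Matrix (Fin d) (Fin d) ℝ) (hB : B.IsHermitian) (hB0 : B ≠ 0) :
    (¬ ∃ i j : Fin d, i ≠ j ∧
        ((0 < hB.eigenvalues i ∧ 0 < hB.eigenvalues j) ∨
         (hB.eigenvalues i < 0 ∧ hB.eigenvalues j < 0))) ↔
      ∃ v w : Fin d → ℝ, v ≠ w ∧ v ≠ -w ∧
        B = Matrix.vecMulVec v v - Matrix.vecMulVec w w := by
  set lam := hB.eigenvalues with hlam
  set u : Fin d → Fin d → ℝ := fun i => ⇑(hB.eigenvectorBasis i) with hu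
  have hBu : ∀ i, B *ᵥ u i = lam i • u i := fun i => hB.mulVec_eigenvectorBasis i
  have hon : ∀ i j, u i ⬝ᵥ u j = if i = j then 1 else 0 := by
    intro i j
    have h := hB.eigenvectorBasis.orthonormal
    rw [orthonormal_iff_ite] at h
    have h2 := h i j
    simpa [PiLp.inner_apply, dotProduct, hu, mul_comm] using h2
  have honii : ∀ i, u i ⬝ᵥ u i = 1 := fun i => by simpa using hon i i
  have hdecomp : B = ∑ i, lam i • vecMulVec (u i) (u i) := spectral_sum' B hB
  constructor
  · intro h
    have hpos : ∀ i j, 0 < lam i → 0 < lam j → i = j := by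
      intro i j hi hj
      by_contra hne
      exact h ⟨i, j, hne, Or.inl ⟨hi, hj⟩⟩
    have hneg : ∀ i j, lam i < 0 → lam j < 0 → i = j := by
      intro i j hi hj
      by_contra hne
      exact h ⟨i, j, hne, Or.inr ⟨hi, hj⟩⟩
    by_cases hp : ∃ p, 0 < lam p
    · obtain ⟨p, hpp⟩ := hp
      by_cases hn : ∃ n, lam n < 0
      · obtain ⟨n, hnn⟩ := hn
        have hpn : p ≠ n := fun e => by rw [e] at hpp; linarith
        set v : Fin d → ℝ := Real.sqrt (lam p) • u p with hv
        set w : Fin d → ℝ := Real.sqrt (-lam n) • u n with hw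
        have hvv : v ⬝ᵥ v = lam p := by
          rw [hv]
          simp only [smul_dotProduct, dotProduct_smul, honii p, smul_eq_mul, mul_one]
          exact Real.mul_self_sqrt hpp.le
        have hvw : v ⬝ᵥ w = 0 := by
          rw [hv, hw]
          simp only [smul_dotProduct, dotProduct_smul, smul_eq_mul]
          rw [hon p n, if_neg hpn]
          ring
        refine ⟨v, w, ?_, ?_, ?_⟩
        · intro e
          have h0 : v ⬝ᵥ v = 0 := by nth_rewrite 2 [e]; exact hvw
          rw [hvv] at h0; linarith
        · intro e
          have h0 : v ⬝ᵥ v = 0 := by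
            nth_rewrite 2 [e]; rw [dotProduct_neg, hvw, neg_zero]
          rw [hvv] at h0; linarith
        · have hzero : ∀ i, i ≠ p → i ≠ n → lam i = 0 := by
            intro i hip hin
            rcases lt_trichotomy (lam i) 0 with h' | h' | h'
            · exact absurd (hneg i n h' hnn) hin
            · exact h'
            · exact absurd (hpos i p h' hpp) hip
          rw [hdecomp]
          rw [← Finset.sum_subset (Finset.subset_univ ({p, n} : Finset (Fin d)))
            (fun i _ hi => by
              simp only [Finset.mem_insert, Finset.mem_singleton, not_or] at hi
              rw [hzero i hi.1 hi.2, zero_smul])]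
          rw [Finset.sum_pair hpn]
          rw [hv, hw, vecMulVec_smul_smul', vecMulVec_smul_smul',
            Real.mul_self_sqrt hpp.le, Real.mul_self_sqrt (by linarith : 0 ≤ -lam n)]
          rw [neg_smul, sub_neg_eq_add]
      · push_neg at hn
        set v : Fin d → ℝ := Real.sqrt (lam p) • u p with hv
        have hvv : v ⬝ᵥ v = lam p := by
          rw [hv]
          simp only [smul_dotProduct, dotProduct_smul, honii p, smul_eq_mul, mul_one]
          exact Real.mul_self_sqrt hpp.le
        have hvne : v ≠ 0 := by
          intro e
          rw [e] at hvv
          simp at hvv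
          linarith
        refine ⟨v, 0, hvne, by simpa using hvne, ?_⟩
        have hzero : ∀ i, i ≠ p → lam i = 0 := by
          intro i hip
          rcases lt_trichotomy (lam i) 0 with h' | h' | h'
          · exact absurd h' (not_lt.mpr (hn i))
          · exact h'
          · exact absurd (hpos i p h' hpp) hip
        rw [hdecomp]
        rw [← Finset.sum_subset (Finset.subset_univ ({p} : Finset (Fin d)))
          (fun i _ hi => by
            simp only [Finset.mem_singleton] at hi
            rw [hzero i hi, zero_smul])]
        rw [Finset.sum_singleton, hv, vecMulVec_smul_smul', Real.mul_self_sqrt hpp.le]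
        have hz : vecMulVec (0 : Fin d → ℝ) (0 : Fin d → ℝ) = (0 : Matrix (Fin d) (Fin d) ℝ) := by
          ext i j; simp [vecMulVec_apply]
        rw [hz, sub_zero]
    · by_cases hn : ∃ n, lam n < 0
      · obtain ⟨n, hnn⟩ := hn
        push_neg at hp
        set w : Fin d → ℝ := Real.sqrt (-lam n) • u n with hw
        have hww : w ⬝ᵥ w = -lam n := by
          rw [hw]
          simp only [smul_dotProduct, dotProduct_smul, honii n, smul_eq_mul, mul_one]
          exact Real.mul_self_sqrt (by linarith)
        have hwne : w ≠ 0 := by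
          intro e
          rw [e] at hww
          simp at hww
          linarith
        refine ⟨0, w, fun e => hwne e.symm, ?_, ?_⟩
        · intro e
          apply hwne
          have := congrArg Neg.neg e
          simpa using this.symm
        · have hzero : ∀ i, i ≠ n → lam i = 0 := by
            intro i hin
            rcases lt_trichotomy (lam i) 0 with h' | h' | h'
            · exact absurd (hneg i n h' hnn) hin
            · exact h'
            · exact absurd h' (not_lt.mpr (hp i))
          rw [hdecomp]
          rw [← Finset.sum_subset (Finset.subset_univ ({n} : Finset (Fin d)))
            (fun i _ hi => by
              simp only [Finset.mem_singleton] at hi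
              rw [hzero i hi, zero_smul])]
          rw [Finset.sum_singleton, hw, vecMulVec_smul_smul',
            Real.mul_self_sqrt (by linarith : 0 ≤ -lam n)]
          have hz : vecMulVec (0 : Fin d → ℝ) (0 : Fin d → ℝ) = (0 : Matrix (Fin d) (Fin d) ℝ) := by
            ext i j; simp [vecMulVec_apply]
          rw [hz, neg_smul, zero_sub, neg_neg]
      · exfalso
        apply hB0
        push_neg at hp hn
        have : ∀ i, lam i = 0 := fun i => le_antisymm (hp i) (hn i)
        rw [hdecomp]
        apply Finset.sum_eq_zero
        intro i _
        rw [this i, zero_smul]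
  · rintro ⟨v, w, -, -, hBvw⟩ ⟨i, j, hij, hcase⟩
    have hijd : u i ⬝ᵥ u j = 0 := by rw [hon i j, if_neg hij]
    rcases hcase with ⟨hi, hj⟩ | ⟨hi, hj⟩
    · exact no_pos_pair hBvw (hBu i) (hBu j) (honii i) (honii j) hijd hi hj
    · have hBvw' : -B = vecMulVec w w - vecMulVec v v := by
        rw [hBvw]; rw [neg_sub]
      have hBi : -B *ᵥ u i = (-lam i) • u i := by
        rw [neg_mulVec, hBu i, neg_smul]
      have hBj : -B *ᵥ u j = (-lam j) • u j := by
        rw [neg_mulVec, hBu j, neg_smul]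
      exact no_pos_pair hBvw' hBi hBj (honii i) (honii j) hijd
        (by linarith) (by linarith)
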